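/- Assume p_{−1,−1} = 0, p_{0,0} > 0 and p_{0,1} > 0. Then for every complex y with |y| = 1 and y ≠ 1, the polynomial x ↦ R(x,y) has exactly one root (counted with multiplicity) in the open unit disk {x : |x| < 1}. -/

import Mathlib

open Polynomial

lemma key_real (p0m p00 p0p u : ℝ) (h0m : 0 ≤ p0m) (h0ppos : 0 < p0p)
    (hqsum : p0m + p0p ≤ 1 - p00) (hu1 : u < 1) :
    0 < 2 * (1 - p00) * (p0m + p0p) - (1 + u) * (4 * p0m * p0p) := by
  have hmain : (p0m + p0p) * ((1 - p00) - (p0m + p0p)) ≥ 0 :=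
    mul_nonneg (by linarith) (by linarith)
  rcases eq_or_lt_of_le h0m with hm | hm
  · rw [← hm]
    have hq : (0:ℝ) < (1 - p00) * p0p := mul_pos (by linarith) h0ppos
    nlinarith [hq]
  · nlinarith [sq_nonneg (p0m - p0p), mul_pos (mul_pos hm h0ppos) (by linarith : (0:ℝ) < 1 - u)]

lemma quad_one_root (a b c : ℂ) (h : ‖a‖ + ‖c‖ < ‖b‖) :
    Multiset.card (Multiset.filter (fun z => ‖z‖ < 1) (C a * X ^ 2 + C b * X + C c).roots) = 1 := by
  have hb : b ≠ 0 := by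
    intro h0
    rw [h0, norm_zero] at h
    nlinarith [norm_nonneg a, norm_nonneg c]
  have hbpos : (0:ℝ) < ‖b‖ := norm_pos_iff.mpr hb
  by_cases ha : a = 0
  · rw [ha] at h ⊢
    simp only [map_zero, zero_mul, zero_add]
    rw [show C b * X + C c = C b * (X - C (-(c/b))) by
      rw [mul_sub, ← C_mul, mul_neg, mul_div_cancel₀ _ hb, C_neg, sub_neg_eq_add]]
    rw [roots_C_mul _ hb, roots_X_sub_C]
    have hlt : ‖-(c / b)‖ < 1 := by
      rw [norm_neg, norm_div, div_lt_one hbpos]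
      rw [norm_zero] at h
      linarith
    rw [Multiset.filter_singleton, if_pos hlt, Multiset.card_singleton]
  · have hd : (C a * X ^ 2 + C b * X + C c).natDegree = 2 := natDegree_quadratic ha
    have hcard : Multiset.card (C a * X ^ 2 + C b * X + C c).roots = 2 := by
      rw [(splits_iff_card_roots).mp (IsAlgClosed.splits _), hd]
    obtain ⟨x1, x2, hr⟩ := Multiset.card_eq_two.mp hcard
    have hlc : (C a * X ^ 2 + C b * X + C c).leadingCoeff = a := leadingCoeff_quadratic ha
    have hp := (C_leadingCoeff_mul_prod_multiset_X_sub_C (p := C a * X ^ 2 + C b * X + C c)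
      (by rw [hd, hcard])).symm
    rw [hlc, hr] at hp
    have hp2 : C a * X ^ 2 + C b * X + C c
        = C a * X ^ 2 + C (-(a * (x1 + x2))) * X + C (a * (x1 * x2)) := by
      rw [hp]
      simp only [Multiset.insert_eq_cons, Multiset.map_cons, Multiset.map_singleton,
        Multiset.prod_cons, Multiset.prod_singleton, C_mul, C_neg, C_add]
      ring
    have hbv : b = -(a * (x1 + x2)) := by
      have h1 := congrArg (fun p => Polynomial.coeff p 1) hp2
      simpa [coeff_add, coeff_C_mul, coeff_X_pow, coeff_C] using h1
    have hcv : c = a * (x1 * x2) := by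
      have h0 := congrArg (fun p => Polynomial.coeff p 0) hp2
      simpa [coeff_add, coeff_C_mul, coeff_X_pow, coeff_C] using h0
    have hapos : (0:ℝ) < ‖a‖ := norm_pos_iff.mpr ha
    have key : (‖x1‖ - 1) * (‖x2‖ - 1) < 0 := by
      have h1 : ‖b‖ ≤ ‖a‖ * (‖x1‖ + ‖x2‖) := by
        rw [hbv, norm_neg, norm_mul]
        exact mul_le_mul_of_nonneg_left (norm_add_le _ _) (norm_nonneg a)
      have h2 : ‖c‖ = ‖a‖ * (‖x1‖ * ‖x2‖) := by rw [hcv, norm_mul, norm_mul]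
      rw [h2] at h
      nlinarith
    rw [hr]
    simp only [Multiset.insert_eq_cons, Multiset.filter_cons, Multiset.filter_singleton]
    rcases lt_or_ge ‖x1‖ 1 with h1 | h1
    · have h2 : ¬ ‖x2‖ < 1 := by nlinarith
      simp [h1, h2]
    · have h1' : ¬ ‖x1‖ < 1 := not_lt.mpr h1
      have h2 : ‖x2‖ < 1 := by nlinarith
      simp [h1', h2]

/-- Assume $p_{-1,-1}=0$, $p_{0,0}>0$, $p_{0,1}>0$. For every $y$ with
$|y|=1$, $y \ne 1$, the polynomial $x \mapsto R(x,y)$ has exactly one root (with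
multiplicity) in the open unit disk. -/
theorem stmt_5
    (pmm pm0 pmp p0m p00 p0p ppm pp0 ppp : ℝ)
    (hmm : 0 ≤ pmm) (hm0 : 0 ≤ pm0) (hmp : 0 ≤ pmp)
    (h0m : 0 ≤ p0m) (h00 : 0 ≤ p00) (h0p : 0 ≤ p0p)
    (hpm : 0 ≤ ppm) (hp0 : 0 ≤ pp0) (hpp : 0 ≤ ppp)
    (hsum : pmm + pm0 + pmp + p0m + p00 + p0p + ppm + pp0 + ppp = 1)
    (hmm0 : pmm = 0) (h00pos : 0 < p00) (h0ppos : 0 < p0p)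
    (Rx : ℂ → Polynomial ℂ)
    (hRx : ∀ y : ℂ, Rx y =
      C (-((ppm : ℂ) + (pp0 : ℂ) * y + (ppp : ℂ) * y ^ 2)) * X ^ 2
      + C (y - ((p0m : ℂ) + (p00 : ℂ) * y + (p0p : ℂ) * y ^ 2)) * X
      + C (-((pmm : ℂ) + (pm0 : ℂ) * y + (pmp : ℂ) * y ^ 2))) :
    ∀ y : ℂ, ‖y‖ = 1 → y ≠ 1 →
      Multiset.card (Multiset.filter (fun z => ‖z‖ < 1) (Rx y).roots) = 1 := by
  intro y hy hy1
  rw [hRx y]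
  apply quad_one_root
  -- norms of powers of y
  have hy2 : ‖y ^ 2‖ = 1 := by rw [norm_pow, hy, one_pow]
  -- bound on a
  have hA : ‖-((ppm : ℂ) + (pp0 : ℂ) * y + (ppp : ℂ) * y ^ 2)‖ ≤ ppm + pp0 + ppp := by
    rw [norm_neg]
    refine le_trans (norm_add₃_le) ?_
    simp only [norm_mul, hy, hy2, mul_one, Complex.norm_real]
    rw [Real.norm_of_nonneg hpm, Real.norm_of_nonneg hp0, Real.norm_of_nonneg hpp]
  have hC : ‖-((pmm : ℂ) + (pm0 : ℂ) * y + (pmp : ℂ) * y ^ 2)‖ ≤ pmm + pm0 + pmp := by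
    rw [norm_neg]
    refine le_trans (norm_add₃_le) ?_
    simp only [norm_mul, hy, hy2, mul_one, Complex.norm_real]
    rw [Real.norm_of_nonneg hmm, Real.norm_of_nonneg hm0, Real.norm_of_nonneg hmp]
  -- lower bound on b
  set u := y.re with hu_def
  set v := y.im with hv_def
  have huv : u ^ 2 + v ^ 2 = 1 := by
    have := Complex.sq_norm y
    rw [hy] at this
    simpa [Complex.normSq_apply, sq] using this.symm
  have hu1 : u < 1 := by
    rcases lt_or_ge u 1 with h | h
    · exact h
    · exfalso
      have him : v = 0 := by nlinarith
      have hre : u = 1 := by nlinarith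
      exact hy1 (Complex.ext hre him)
  have hum : -1 ≤ u := by nlinarith
  have hqsum : p0m + p0p ≤ 1 - p00 := by linarith
  set b : ℂ := y - ((p0m : ℂ) + (p00 : ℂ) * y + (p0p : ℂ) * y ^ 2) with hb_def
  have hbre : b.re = u - p0m - p00 * u - p0p * (u * u - v * v) := by
    simp [hb_def, sq, Complex.mul_re, Complex.mul_im]
    ring
  have hbim : b.im = v - p00 * v - p0p * (u * v + v * u) := by
    simp [hb_def, sq, Complex.mul_re, Complex.mul_im]
    ring
  have hbsq : ‖b‖ ^ 2 = b.re ^ 2 + b.im ^ 2 := by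
    rw [Complex.sq_norm, Complex.normSq_apply]; ring
  have hfac : 0 < (1 - u) * (2 * (1 - p00) * (p0m + p0p) - (1 + u) * (4 * p0m * p0p)) := by
    exact mul_pos (by linarith) (key_real p0m p00 p0p u h0m h0ppos hqsum hu1)
  have hD : b.re ^ 2 + b.im ^ 2 - (1 - p00 - p0m - p0p) ^ 2
      = (1 - u) * (2 * (1 - p00) * (p0m + p0p) - (1 + u) * (4 * p0m * p0p)) := by
    rw [hbre, hbim]
    linear_combination ((1 - p00) ^ 2 + p0p ^ 2 * (u ^ 2 + v ^ 2 + 1)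
      - 2 * (1 - p00) * p0p * u - 2 * p0m * p0p) * huv
  have hBlt : 1 - p00 - p0m - p0p < ‖b‖ := by
    have h1 : (1 - p00 - p0m - p0p) ^ 2 < ‖b‖ ^ 2 := by rw [hbsq]; linarith
    have h2 : 0 ≤ 1 - p00 - p0m - p0p := by linarith
    exact lt_of_pow_lt_pow_left₀ 2 (norm_nonneg b) h1
  have hsum' : ppm + pp0 + ppp + (pmm + pm0 + pmp) = 1 - p00 - p0m - p0p := by linarith
  calc ‖-((ppm : ℂ) + (pp0 : ℂ) * y + (ppp : ℂ) * y ^ 2)‖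
        + ‖-((pmm : ℂ) + (pm0 : ℂ) * y + (pmp : ℂ) * y ^ 2)‖
      ≤ ppm + pp0 + ppp + (pmm + pm0 + pmp) := add_le_add hA hC
    _ = 1 - p00 - p0m - p0p := hsum'
    _ < ‖b‖ := hBlt
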